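/- A group generated by finitely many elements of finite order whose centre has finite index is finite. -/

import Mathlib

open scoped commutatorElement

private lemma comm_central_aux {G : Type*} [Group G] (g h z w : G)
    (hz : z ∈ Subgroup.center G) (hw : w ∈ Subgroup.center G) :
    ⁅g * z, h * w⁆ = ⁅g, h⁆ := by
  have hz' := Subgroup.mem_center_iff.mp hz
  have hw' := Subgroup.mem_center_iff.mp hw
  have key : ∀ a b c : G, (∀ x, x * c = c * x) → ⁅a * c, b⁆ = ⁅a, b⁆ := by
    intro a b c hc
    simp only [commutatorElement_def, mul_inv_rev]
    have h1 : c * b * c⁻¹ = b := by rw [← hc b, mul_assoc, mul_inv_cancel, mul_one]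
    calc a * c * b * (c⁻¹ * a⁻¹) * b⁻¹ = a * (c * b * c⁻¹) * a⁻¹ * b⁻¹ := by
          simp only [mul_assoc]
      _ = a * b * a⁻¹ * b⁻¹ := by rw [h1]
  have step1 : ⁅g * z, h * w⁆ = ⁅g, h * w⁆ := key g (h * w) z hz'
  have step2 : ⁅h * w, g⁆ = ⁅h, g⁆ := key h g w hw'
  rw [step1, ← inv_inv ⁅g, h * w⁆, commutatorElement_inv, step2, commutatorElement_inv]

theorem finite_of_torsion_gen_center_finite_index (G : Type*) [Group G]
    (hZ : (Subgroup.center G).index ≠ 0)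
    (S : Finset G) (htor : ∀ x ∈ S, IsOfFinOrder x)
    (hgen : Subgroup.closure (S : Set G) = ⊤) :
    Finite G := by
  haveI hfinQ : Finite (G ⧸ Subgroup.center G) := by
    rw [Subgroup.index_eq_card] at hZ
    exact (Nat.card_ne_zero.mp hZ).2
  haveI hcs : Finite (commutatorSet G) := by
    let f : (G ⧸ Subgroup.center G) × (G ⧸ Subgroup.center G) → G :=
      fun p => ⁅p.1.out, p.2.out⁆
    have hsub : commutatorSet G ⊆ Set.range f := by
      rintro x ⟨g, h, rfl⟩
      refine ⟨(QuotientGroup.mk g, QuotientGroup.mk h), ?_⟩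
      obtain ⟨z, hz⟩ := QuotientGroup.mk_out_eq_mul (Subgroup.center G) g
      obtain ⟨w, hw⟩ := QuotientGroup.mk_out_eq_mul (Subgroup.center G) h
      show ⁅(QuotientGroup.mk g : G ⧸ Subgroup.center G).out,
        (QuotientGroup.mk h : G ⧸ Subgroup.center G).out⁆ = ⁅g, h⁆
      rw [hz, hw, comm_central_aux g h z w z.2 w.2]
    exact ((Set.finite_range f).subset hsub).to_subtype
  haveI hcomm : Finite (commutator G) := inferInstance
  haveI hab : Finite (Abelianization G) := by
    have hmapgen : Subgroup.closure (Abelianization.of '' (S : Set G)) = ⊤ := by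
      rw [← MonoidHom.map_closure, hgen]
      exact Subgroup.map_top_of_surjective _ (fun x => QuotientGroup.mk_surjective x)
    haveI hfg : Group.FG (Abelianization G) :=
      Group.fg_iff.mpr ⟨_, hmapgen, (S.finite_toSet.image _)⟩
    have htor' : Monoid.IsTorsion (Abelianization G) := by
      intro g
      have hle : Subgroup.closure (Abelianization.of '' (S : Set G)) ≤
          CommGroup.torsion (Abelianization G) := by
        apply Subgroup.closure_le _ |>.mpr
        rintro x ⟨s, hs, rfl⟩
        exact Abelianization.of.isOfFinOrder (htor s hs)
      rw [← CommGroup.mem_torsion]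
      exact hle (hmapgen ▸ Subgroup.mem_top g)
    exact CommGroup.finite_of_fg_torsion _ htor'
  haveI hquot : Finite (G ⧸ commutator G) := hab
  exact Finite.of_equiv _ (Subgroup.groupEquivQuotientProdSubgroup (s := commutator G)).symm
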